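/- Let j ≥ 4 with j ≠ 6, and let e ≥ 1. Then for every integer i ≥ 1, F_i^e ≡ 0 (mod F_j) if and only if j divides i. -/

import Mathlib

open Nat

lemma rec1 (d k : ℕ) (hd : 1 ≤ d) :
    fib (d*(k+1)) = fib (d*k) * fib (d-1) + fib (d*k+1) * fib d := by
  have h := Nat.fib_add (d*k) (d-1)
  have e0 : d*(k+1) = d*k + d := by ring
  have e1 : d*k + (d-1) + 1 = d*(k+1) := by omega
  have e2 : d - 1 + 1 = d := by omega
  rw [e1, e2] at h
  exact h

lemma rec2 (d k : ℕ) :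
    fib (d*(k+1)+1) = fib (d*k) * fib d + fib (d*k+1) * fib (d+1) := by
  have h := Nat.fib_add (d*k) d
  have e1 : d*k + d + 1 = d*(k+1)+1 := by ring
  rw [e1] at h
  exact h

lemma fib_succ_eq (d : ℕ) (hd : 1 ≤ d) : fib (d+1) = fib (d-1) + fib d := by
  have e : d + 1 = (d-1) + 2 := by omega
  rw [e, Nat.fib_add_two]
  congr 1 <;> congr 1 <;> omega

lemma PS (d : ℕ) (hd : 1 ≤ d) (m : ℕ) :
    (∃ c, fib (d*(m+1)) = (m+1) * fib d * fib (d-1)^m + fib d^2 * c) ∧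
    (∃ c, fib (d*(m+1)+1) = fib (d-1)^(m+1) + (m+1) * fib d * fib (d-1)^m + fib d^2 * c) := by
  set a := fib d with ha
  set b := fib (d-1) with hb
  induction m with
  | zero =>
    constructor
    · exact ⟨0, by simp [ha]⟩
    · exact ⟨0, by simp [mul_one, fib_succ_eq d hd, add_comm, ha, hb]⟩
  | succ m ih =>
    obtain ⟨⟨c1, hc1⟩, ⟨c2, hc2⟩⟩ := ih
    constructor
    · refine ⟨c1 * b + a * c2 + (m+1) * b^m, ?_⟩
      rw [rec1 d (m+1) hd, hc1, hc2]
      push_cast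
      ring
    · refine ⟨a * c1 + (a+b) * c2 + (2*m+2) * b^m, ?_⟩
      rw [rec2 d (m+1), hc1, hc2, fib_succ_eq d hd]
      push_cast
      ring

open Nat

lemma Qlem (d : ℕ) (hd : 1 ≤ d) (m : ℕ) :
    ∃ c, 2 * fib (d*(m+2)) = 2*(m+2) * fib d * fib (d-1)^(m+1)
      + (m+2)*(m+1) * fib d^2 * fib (d-1)^m + 2 * fib d^3 * c := by
  set a := fib d with ha
  set b := fib (d-1) with hb
  induction m with
  | zero =>
    refine ⟨0, ?_⟩
    have h1 := rec1 d 1 hd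
    have h2 : fib (d*1+1) = b + a := by rw [mul_one, fib_succ_eq d hd]
    rw [h1, h2, mul_one, ← ha]
    ring
  | succ m ih =>
    obtain ⟨c, hc⟩ := ih
    obtain ⟨c2, hc2⟩ := (PS d hd (m+1)).2
    refine ⟨c * b + c2, ?_⟩
    have h1 := rec1 d (m+2) hd
    rw [h1]
    have e : 2 * (fib (d*(m+2)) * b + fib (d*(m+2)+1) * a)
        = (2 * fib (d*(m+2))) * b + 2 * fib (d*(m+2)+1) * a := by ring
    rw [e, hc, hc2]
    ring

lemma fib_add_twelve (n : ℕ) : fib (n+12) = fib n * 89 + fib (n+1) * 144 := by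
  have h := Nat.fib_add n 11
  have h11 : fib 11 = 89 := by norm_num [fib]
  have h12 : fib 12 = 144 := by norm_num [fib]
  rw [show n+11+1 = n+12 from by omega, h11, h12] at h
  exact h

lemma fib_mod8_period (k : ℕ) : ∀ r, fib (r + 12*k) % 8 = fib r % 8 := by
  induction k with
  | zero => intro r; rfl
  | succ k ih =>
    intro r
    have e : r + 12*(k+1) = (r + 12*k) + 12 := by ring
    rw [e, fib_add_twelve]
    have := ih r
    omega
    
lemma L8 (m : ℕ) : (2 * fib m + fib (m+1)) % 8 ≠ 0 := by
  have hm : m = m % 12 + 12 * (m/12) := by omega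
  have h1 : fib m % 8 = fib (m % 12) % 8 := by
    conv_lhs => rw [hm]
    exact fib_mod8_period (m/12) (m % 12)
  have h2 : fib (m+1) % 8 = fib (m % 12 + 1) % 8 := by
    conv_lhs => rw [show m + 1 = (m % 12 + 1) + 12 * (m/12) by omega]
    exact fib_mod8_period (m/12) (m % 12 + 1)
  have h3 : (2 * fib m + fib (m+1)) % 8 = (2 * (fib (m%12) % 8) + fib (m%12+1) % 8) % 8 := by
    rw [← h1, ← h2]; omega
  rw [h3]
  obtain ⟨r, hr, e⟩ : ∃ r, r < 12 ∧ m % 12 = r := ⟨m % 12, Nat.mod_lt _ (by norm_num), rfl⟩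
  rw [e]
  interval_cases r <;> decide
lemma key (d q : ℕ) (hq : q.Prime) (hd3 : 3 ≤ d) (hd3q : ¬(d = 3 ∧ q = 2))
    (H : ∀ p, p.Prime → p ∣ fib (d*q) → p ∣ fib d) : False := by
  set a := fib d with ha
  set b := fib (d-1) with hb
  have hd1 : 1 ≤ d := by omega
  have ha2 : 2 ≤ a := by
    have := Nat.fib_mono hd3
    exact le_trans (by decide : 2 ≤ fib 3) this
  have hb1 : 1 ≤ b := Nat.fib_pos.mpr (by omega)
  have hcop : Nat.Coprime b a := by
    have := Nat.fib_coprime_fib_succ (d-1)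
    rwa [show d - 1 + 1 = d from by omega] at this
  have hq2le : 2 ≤ q := hq.two_le
  obtain ⟨F, hF⟩ : a ∣ fib (d*q) := Nat.fib_dvd d (d*q) ⟨q, rfl⟩
  obtain ⟨c, hc⟩ := (PS d hd1 (q-1)).1
  rw [show q - 1 + 1 = q from by omega] at hc
  have hFeq : F = q * b^(q-1) + a * c := by
    apply Nat.eq_of_mul_eq_mul_left (show 0 < a by omega)
    rw [← hF, hc]; ring
  have hFdvd : F ∣ fib (d*q) := ⟨a, by rw [hF]; ring⟩
  have hprimes : ∀ p, p.Prime → p ∣ F → p = q := by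
    intro p hp hpF
    have hpa : p ∣ a := H p hp (hpF.trans hFdvd)
    have hpq : p ∣ q * b^(q-1) := by
      have h1 : p ∣ a * c := hpa.mul_right c
      have h2 := Nat.dvd_sub (hFeq ▸ hpF) h1
      simpa using h2
    rcases (Nat.Prime.dvd_mul hp).mp hpq with h | h
    · exact (Nat.prime_dvd_prime_iff_eq hp hq).mp h
    · exfalso
      have hpb := hp.dvd_of_dvd_pow h
      have hp1 : p ∣ 1 := hcop ▸ Nat.dvd_gcd hpb hpa
      exact hp.one_lt.ne' (Nat.dvd_one.mp hp1)
  have hF2 : 2 ≤ F := by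
    have h1 : 1 ≤ b^(q-1) := Nat.one_le_pow _ _ (by omega)
    have : 2 ≤ q * b^(q-1) := le_trans hq2le (Nat.le_mul_of_pos_right q (by omega))
    omega
  have hqF : q ∣ F := by
    have hmf := Nat.minFac_prime (show F ≠ 1 by omega)
    have := hprimes _ hmf (Nat.minFac_dvd F)
    exact this ▸ Nat.minFac_dvd F
  have hqa : q ∣ a := H q hq (hqF.trans hFdvd)
  have hFpow : F = q ^ F.primeFactorsList.length :=
    Nat.eq_prime_pow_of_unique_prime_dvd (by omega) (fun hp hdd => hprimes _ hp hdd)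
  set L := F.primeFactorsList.length with hL
  rcases eq_or_ne q 2 with rfl | hodd
  · -- q = 2
    have hd4 : 4 ≤ d := by
      rcases Nat.lt_or_ge d 4 with h | h
      · exact absurd ⟨by omega, rfl⟩ hd3q
      · exact h
    have hFex : F = 2*b + a := by
      apply Nat.eq_of_mul_eq_mul_left (show 0 < a by omega)
      rw [← hF, show (2:ℕ) = 1 + 1 from rfl, rec1 d 1 hd1, mul_one, fib_succ_eq d hd1, ← ha, ← hb]
      ring
    have hbge : 2 ≤ b := by
      have := Nat.fib_mono (show 3 ≤ d - 1 by omega)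
      simpa [hb, fib] using this
    have hage : 3 ≤ a := by
      have := Nat.fib_mono hd4
      simpa [ha, fib] using this
    have hF7 : 7 ≤ F := by omega
    have h8 : (8:ℕ) ∣ F := by
      have hL3 : 3 ≤ L := by
        by_contra hcon
        have h' : (2:ℕ)^L ≤ 2^2 := Nat.pow_le_pow_right (by norm_num) (by omega)
        norm_num at h'
        omega
      rw [hFpow]
      exact pow_dvd_pow 2 hL3 |>.trans (by rw [← hFpow])
    apply L8 (d-1)
    have e : 2 * fib (d-1) + fib (d-1+1) = F := by
      rw [show d-1+1 = d from by omega, ← ha, ← hb]; omega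
    rw [e]
    omega
  · -- q odd
    have hq3 : 3 ≤ q := by omega
    obtain ⟨c', hc'⟩ := Qlem d hd1 (q-2)
    rw [show q-2+2 = q from by omega, show q-2+1 = q-1 from by omega] at hc'
    have h2F : 2*F = 2*q*b^(q-1) + q*(q-1)*a*b^(q-2) + 2*a^2*c' := by
      apply Nat.eq_of_mul_eq_mul_left (show 0 < a by omega)
      rw [show a*(2*F) = 2*(a*F) from by ring, ← hF, hc']
      ring
    have hFgtq : q < F := by
      have h1 : 1 ≤ b^(q-1) := Nat.one_le_pow _ _ (by omega)
      have h2 : 1 ≤ b^(q-2) := Nat.one_le_pow _ _ (by omega)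
      have t1 : 2*q*1 ≤ 2*q*b^(q-1) := by gcongr <;> omega
      have t2 : q*2*2*1 ≤ q*(q-1)*a*b^(q-2) := by
        gcongr <;> first | exact h2 | exact ha2 | omega
      omega
    have hL2 : 2 ≤ L := by
      by_contra hcon
      have h' : F ≤ q^1 := by
        rw [hFpow]
        exact Nat.pow_le_pow_right (by omega) (by omega)
      rw [pow_one] at h'
      omega
    have hq2F : q*q ∣ F := by
      rw [hFpow, ← Nat.pow_two]
      exact (pow_dvd_pow q hL2).trans (by rw [← hFpow])
    obtain ⟨a1, ha1⟩ := id hqa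
    have hkey : q*q ∣ 2*q*b^(q-1) := by
      have hd1' : q*q ∣ q*(q-1)*a*b^(q-2) := ⟨(q-1)*a1*b^(q-2), by rw [ha1]; ring⟩
      have hd2' : q*q ∣ 2*a^2*c' := ⟨2*a1^2*c', by rw [ha1]; ring⟩
      have hd3' : q*q ∣ 2*F := Dvd.dvd.mul_left hq2F 2
      have h4 := Nat.dvd_sub (Nat.dvd_sub hd3' hd2') hd1'
      rw [show 2*F - 2*a^2*c' - q*(q-1)*a*b^(q-2) = 2*q*b^(q-1) from by omega] at h4
      exact h4
    have hqdvd : q ∣ 2*b^(q-1) := by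
      have := (mul_dvd_mul_iff_left (show (q:ℕ) ≠ 0 by omega)).mp
        (show q*q ∣ q*(2*b^(q-1)) from by rw [show q*(2*b^(q-1)) = 2*q*b^(q-1) from by ring]; exact hkey)
      exact this
    rcases (Nat.Prime.dvd_mul hq).mp hqdvd with h | h
    · have := Nat.le_of_dvd (by norm_num) h
      omega
    · have hqb := hq.dvd_of_dvd_pow h
      have hp1 : q ∣ 1 := hcop ▸ Nat.dvd_gcd hqb hqa
      exact hq.one_lt.ne' (Nat.dvd_one.mp hp1)
theorem fib_pow_dvd_iff (j e i : ℕ) (hj : 4 ≤ j) (hj6 : j ≠ 6) (he : 1 ≤ e) (hi : 1 ≤ i) :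
    Nat.fib j ∣ (Nat.fib i) ^ e ↔ j ∣ i := by
  constructor
  · intro h
    by_contra hnd
    set d0 := Nat.gcd j i with hd0
    have hd0j : d0 ∣ j := Nat.gcd_dvd_left j i
    have hd0i : d0 ∣ i := Nat.gcd_dvd_right j i
    have hd0ne : d0 ≠ j := fun hee => hnd (hee ▸ hd0i)
    have hd0pos : 0 < d0 := Nat.gcd_pos_of_pos_left i (by omega)
    have hprime0 : ∀ p, p.Prime → p ∣ fib j → p ∣ fib d0 := by
      intro p hp hpj
      have hpi : p ∣ fib i := hp.dvd_of_dvd_pow (hpj.trans h)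
      rw [hd0, Nat.fib_gcd]
      exact Nat.dvd_gcd hpj hpi
    obtain ⟨t, ht⟩ := hd0j
    have ht2 : 2 ≤ t := by
      rcases Nat.lt_or_ge t 2 with h' | h'
      · interval_cases t <;> omega
      · exact h'
    set q := t.minFac with hqdef
    have hqp : q.Prime := Nat.minFac_prime (by omega)
    obtain ⟨s, hs⟩ := Nat.minFac_dvd t
    set d := d0 * s with hd
    have hjdq : j = d * q := by rw [ht, hs, hd]; ring
    have H : ∀ p, p.Prime → p ∣ fib (d*q) → p ∣ fib d := by
      intro p hp hpj
      have h1 : p ∣ fib d0 := hprime0 p hp (by rwa [hjdq])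
      exact h1.trans (Nat.fib_dvd d0 d (Dvd.intro s rfl))
    have hdpos : 1 ≤ d := by
      rcases Nat.eq_zero_or_pos d with h' | h'
      · rw [h', zero_mul] at hjdq; omega
      · exact h'
    have hfj3 : 3 ≤ fib j := by
      have := Nat.fib_mono hj
      simpa [fib] using this
    rcases Nat.lt_or_ge d 3 with hdlt | hdge
    · -- d ∈ {1, 2}: fib d = 1
      have hfd1 : fib d = 1 := by interval_cases d <;> rfl
      have hmf := Nat.minFac_prime (show fib j ≠ 1 by omega)
      have := H _ hmf (by rw [← hjdq]; exact Nat.minFac_dvd _)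
      rw [hfd1] at this
      exact hmf.one_lt.ne' (Nat.dvd_one.mp this)
    · refine key d q hqp hdge ?_ H
      rintro ⟨h1, h2⟩
      rw [h1, h2] at hjdq
      omega
  · intro hji
    exact (Nat.fib_dvd j i hji).trans (dvd_pow_self (fib i) (by omega))
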